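/- arXiv:2003.13478 — 4 statements merged into one kernel-verified Lean document; each statement's English description precedes it below -/
import Mathlib

section
/- Let A be a nonnegative self-adjoint bounded linear operator on a complex Hilbert space H, let α > 0 and γ ∈ (0,1], and let ψ ∈ H. Then α I + A is invertible and ‖(I − (α I + A)⁻¹ A) A^γ ψ‖ ≤ α^γ ‖ψ‖. -/
/-- Pointwise bound: for `x ≥ 0`, `α x^γ / (α+x) ≤ α^γ`. -/
lemma stmt_6_aux {α γ x : ℝ} (hα : 0 < α) (hγ0 : 0 < γ) (hγ1 : γ ≤ 1) (hx0 : 0 ≤ x) :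
    α * x ^ γ ≤ α ^ γ * (α + x) := by
  rcases le_total x α with h | h
  · calc α * x ^ γ ≤ α * α ^ γ :=
          mul_le_mul_of_nonneg_left (Real.rpow_le_rpow hx0 h hγ0.le) hα.le
      _ = α ^ γ * α := mul_comm _ _
      _ ≤ α ^ γ * (α + x) :=
          mul_le_mul_of_nonneg_left (le_add_of_nonneg_right hx0) (Real.rpow_nonneg hα.le γ)
  · have hx : 0 < x := hα.trans_le h
    have h1 : α ^ (1 - γ) ≤ x ^ (1 - γ) := Real.rpow_le_rpow hα.le h (by linarith)
    calc α * x ^ γ = α ^ (1 - γ) * α ^ γ * x ^ γ := by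
          rw [← Real.rpow_add hα]; norm_num
      _ ≤ x ^ (1 - γ) * α ^ γ * x ^ γ := by
          apply mul_le_mul_of_nonneg_right _ (Real.rpow_nonneg hx0 γ)
          exact mul_le_mul_of_nonneg_right h1 (Real.rpow_nonneg hα.le γ)
      _ = α ^ γ * (x ^ (1 - γ) * x ^ γ) := by ring
      _ = α ^ γ * x := by rw [← Real.rpow_add hx]; norm_num
      _ ≤ α ^ γ * (α + x) :=
          mul_le_mul_of_nonneg_left (le_add_of_nonneg_left hα.le) (Real.rpow_nonneg hα.le γ)

/-- Let `A` be a nonnegative self-adjoint bounded linear operator on a complex Hilbert space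
`H`, let `α > 0` and `γ ∈ (0,1]`, and let `ψ ∈ H`. Then `α I + A` is invertible and
`‖(I − (α I + A)⁻¹ A) (A^γ ψ)‖ ≤ α^γ ‖ψ‖`, where `A^γ` is given by the continuous
functional calculus applied to `fun λ => λ ^ γ`. -/
theorem stmt_6 {H : Type*} [NormedAddCommGroup H] [InnerProductSpace ℂ H] [CompleteSpace H]
    (A : H →L[ℂ] H) (hA : A.IsPositive) (α γ : ℝ) (hα : 0 < α) (hγ : γ ∈ Set.Ioc (0 : ℝ) 1)
    (ψ : H) :
    IsUnit ((α : ℂ) • (1 : H →L[ℂ] H) + A) ∧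
      ‖((1 : H →L[ℂ] H) - Ring.inverse ((α : ℂ) • (1 : H →L[ℂ] H) + A) ∘L A)
          (cfc (fun x : ℝ => x ^ γ) A ψ)‖ ≤ α ^ γ * ‖ψ‖ := by
  obtain ⟨hγ0, hγ1⟩ := hγ
  have hsa : IsSelfAdjoint A := hA.isSelfAdjoint
  have hA0 : (0 : H →L[ℂ] H) ≤ A := (ContinuousLinearMap.nonneg_iff_isPositive A).mpr hA
  have hspec : ∀ x ∈ spectrum ℝ A, 0 < α + x := fun x hx =>
    add_pos_of_pos_of_nonneg hα (spectrum_nonneg_of_nonneg hA0 hx)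
  have hcont_inv : ContinuousOn (fun x : ℝ => (α + x)⁻¹) (spectrum ℝ A) :=
    ContinuousOn.inv₀ (by fun_prop) fun x hx => (hspec x hx).ne'
  have hsmul : (α : ℂ) • (1 : H →L[ℂ] H) = algebraMap ℝ (H →L[ℂ] H) α := by
    rw [Algebra.algebraMap_eq_smul_one, Complex.coe_smul]
  have hM : (α : ℂ) • (1 : H →L[ℂ] H) + A = cfc (fun x : ℝ => α + x) A := by
    rw [cfc_const_add α (fun x : ℝ => x) A (by fun_prop), cfc_id' ℝ A, hsmul]
  set u : H →L[ℂ] H := cfc (fun x : ℝ => (α + x)⁻¹) A with hu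
  have h1 : ((α : ℂ) • (1 : H →L[ℂ] H) + A) * u = 1 := by
    rw [hM, hu, ← cfc_mul _ _ A (by fun_prop) hcont_inv,
      cfc_congr (g := fun _ : ℝ => 1) fun x hx => mul_inv_cancel₀ (hspec x hx).ne',
      cfc_const_one ℝ A]
  have h2 : u * ((α : ℂ) • (1 : H →L[ℂ] H) + A) = 1 := by
    rw [hM, hu, ← cfc_mul _ _ A hcont_inv (by fun_prop),
      cfc_congr (g := fun _ : ℝ => 1) fun x hx => inv_mul_cancel₀ (hspec x hx).ne',
      cfc_const_one ℝ A]
  have hunit : IsUnit ((α : ℂ) • (1 : H →L[ℂ] H) + A) := ⟨⟨_, u, h1, h2⟩, rfl⟩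
  have hinv : Ring.inverse ((α : ℂ) • (1 : H →L[ℂ] H) + A) = u := by
    have := Ring.inverse_unit (⟨_, u, h1, h2⟩ : (H →L[ℂ] H)ˣ)
    simpa using this
  refine ⟨hunit, ?_⟩
  have hcont_g : ContinuousOn (fun x : ℝ => (α + x)⁻¹ * x) (spectrum ℝ A) :=
    hcont_inv.mul (by fun_prop)
  have hop : (1 : H →L[ℂ] H) - Ring.inverse ((α : ℂ) • (1 : H →L[ℂ] H) + A) ∘L A
      = cfc (fun x : ℝ => 1 - (α + x)⁻¹ * x) A := by
    rw [hinv, cfc_sub (fun _ : ℝ => 1) (fun x : ℝ => (α + x)⁻¹ * x) A (by fun_prop) hcont_g,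
      cfc_const_one ℝ A, cfc_mul _ _ A hcont_inv (by fun_prop), cfc_id' ℝ A]
    rfl
  have hγcont : ContinuousOn (fun x : ℝ => x ^ γ) (spectrum ℝ A) := fun x _ =>
    (Real.continuousAt_rpow_const x γ (Or.inr hγ0.le)).continuousWithinAt
  have happ : ((1 : H →L[ℂ] H) - Ring.inverse ((α : ℂ) • (1 : H →L[ℂ] H) + A) ∘L A)
        (cfc (fun x : ℝ => x ^ γ) A ψ)
      = cfc (fun x : ℝ => (1 - (α + x)⁻¹ * x) * x ^ γ) A ψ := by
    rw [hop, cfc_mul (fun x : ℝ => 1 - (α + x)⁻¹ * x) (fun x : ℝ => x ^ γ) A ((continuousOn_const.sub hcont_g)) hγcont]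
    rfl
  rw [happ]
  have hbound : ∀ x ∈ spectrum ℝ A, ‖(1 - (α + x)⁻¹ * x) * x ^ γ‖ ≤ α ^ γ := by
    intro x hx
    have hx0 : 0 ≤ x := spectrum_nonneg_of_nonneg hA0 hx
    have hax : 0 < α + x := hspec x hx
    have heq : 1 - (α + x)⁻¹ * x = α * (α + x)⁻¹ := by
      field_simp
      ring
    rw [heq, Real.norm_eq_abs, abs_of_nonneg (by positivity)]
    rw [show α * (α + x)⁻¹ * x ^ γ = α * x ^ γ / (α + x) by ring]
    rw [div_le_iff₀ hax]
    exact stmt_6_aux hα hγ0 hγ1 hx0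
  calc ‖cfc (fun x : ℝ => (1 - (α + x)⁻¹ * x) * x ^ γ) A ψ‖
      ≤ ‖cfc (fun x : ℝ => (1 - (α + x)⁻¹ * x) * x ^ γ) A‖ * ‖ψ‖ :=
        ContinuousLinearMap.le_opNorm _ _
    _ ≤ α ^ γ * ‖ψ‖ :=
        mul_le_mul_of_nonneg_right (norm_cfc_le (Real.rpow_nonneg hα.le γ) hbound)
          (norm_nonneg ψ)
end

section
/- Let H₁, H₂ be complex Hilbert spaces, K, K̂ : H₁ → H₂ bounded linear operators, α > 0, β ∈ H₁ and r̂ ∈ H₂, and set β̂ = (α I + K̂*K̂)⁻¹ K̂* r̂ (the inverses below exist since K̂*K̂ and K*K are nonnegative self-adjoint and α > 0). Then β̂ − β = (α I + K̂*K̂)⁻¹ K̂* (r̂ − K̂β) + α (α I + K̂*K̂)⁻¹ K̂* (K̂ − K)(α I + K*K)⁻¹ β + α (α I + K̂*K̂)⁻¹ (K̂* − K*) K (α I + K*K)⁻¹ β + [(α I + K*K)⁻¹ K*K β − β]. -/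
open ContinuousLinearMap RCLike

set_option maxHeartbeats 1000000

lemma isUnit_aux {H₁ H₂ : Type*} [NormedAddCommGroup H₁] [InnerProductSpace ℂ H₁]
    [CompleteSpace H₁] [NormedAddCommGroup H₂] [InnerProductSpace ℂ H₂] [CompleteSpace H₂]
    (A : H₁ →L[ℂ] H₂) (α : ℝ) (hα : 0 < α) :
    IsUnit ((α : ℂ) • (1 : H₁ →L[ℂ] H₁) + adjoint A ∘L A) := by
  apply isUnit_of_forall_le_norm_inner_map _ (c := α.toNNReal) (by simpa using hα)
  intro x
  have h1 : inner ℂ (((α : ℂ) • (1 : H₁ →L[ℂ] H₁) + adjoint A ∘L A) x) x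
      = ((α : ℂ) * (‖x‖ : ℂ) ^ 2 + (‖A x‖ : ℂ) ^ 2 : ℂ) := by
    simp only [add_apply, coe_smul', Pi.smul_apply, one_apply, comp_apply,
      inner_add_left, inner_smul_left, adjoint_inner_left]
    rw [ContinuousLinearMap.one_apply, inner_self_eq_norm_sq_to_K]
    ring_nf
    simp [Complex.conj_ofReal]
  rw [h1]
  have h2 : ((α : ℂ) * (‖x‖ : ℂ) ^ 2 + (‖A x‖ : ℂ) ^ 2 : ℂ)
      = ((α * ‖x‖ ^ 2 + ‖A x‖ ^ 2 : ℝ) : ℂ) := by push_cast; ring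
  rw [h2, Complex.norm_real, Real.norm_of_nonneg (by positivity)]
  have hc : (α.toNNReal : ℝ) = α := Real.coe_toNNReal _ hα.le
  nlinarith [sq_nonneg ‖A x‖, sq_nonneg ‖x‖]

lemma apply_aux {H₁ H₂ : Type*} [NormedAddCommGroup H₁] [InnerProductSpace ℂ H₁]
    [CompleteSpace H₁] [NormedAddCommGroup H₂] [InnerProductSpace ℂ H₂] [CompleteSpace H₂]
    (A : H₁ →L[ℂ] H₂) (α : ℝ) (x : H₁) :
    ((α : ℂ) • (1 : H₁ →L[ℂ] H₁) + adjoint A ∘L A) x = (α : ℂ) • x + adjoint A (A x) := by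
  simp [ContinuousLinearMap.smul_apply]

/-- Exact error decomposition `β̂ − β = R₁ + R₂ + R₃ + R₄` for the Tikhonov-regularized
estimator `β̂ = (α I + K̂*K̂)⁻¹ K̂* r̂`, where the inverses exist since `K̂*K̂` and `K*K` are
nonnegative self-adjoint and `α > 0`. -/
theorem stmt_12 {H₁ H₂ : Type*} [NormedAddCommGroup H₁] [InnerProductSpace ℂ H₁]
    [CompleteSpace H₁] [NormedAddCommGroup H₂] [InnerProductSpace ℂ H₂] [CompleteSpace H₂]
    (K Khat : H₁ →L[ℂ] H₂) (α : ℝ) (hα : 0 < α) (β : H₁) (rhat : H₂) (βhat : H₁)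
    (hβhat : βhat =
      Ring.inverse ((α : ℂ) • (1 : H₁ →L[ℂ] H₁) + adjoint Khat ∘L Khat) (adjoint Khat rhat)) :
    βhat - β =
      Ring.inverse ((α : ℂ) • (1 : H₁ →L[ℂ] H₁) + adjoint Khat ∘L Khat)
          (adjoint Khat (rhat - Khat β)) +
        (α : ℂ) • (Ring.inverse ((α : ℂ) • (1 : H₁ →L[ℂ] H₁) + adjoint Khat ∘L Khat)
          (adjoint Khat ((Khat - K)
            (Ring.inverse ((α : ℂ) • (1 : H₁ →L[ℂ] H₁) + adjoint K ∘L K) β)))) +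
        (α : ℂ) • (Ring.inverse ((α : ℂ) • (1 : H₁ →L[ℂ] H₁) + adjoint Khat ∘L Khat)
          ((adjoint Khat - adjoint K)
            (K (Ring.inverse ((α : ℂ) • (1 : H₁ →L[ℂ] H₁) + adjoint K ∘L K) β)))) +
        (Ring.inverse ((α : ℂ) • (1 : H₁ →L[ℂ] H₁) + adjoint K ∘L K)
            ((adjoint K ∘L K) β) - β) := by
  subst hβhat
  set Mh : H₁ →L[ℂ] H₁ := (α : ℂ) • (1 : H₁ →L[ℂ] H₁) + adjoint Khat ∘L Khat with hMh
  set M : H₁ →L[ℂ] H₁ := (α : ℂ) • (1 : H₁ →L[ℂ] H₁) + adjoint K ∘L K with hM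
  have hu1 : IsUnit Mh := isUnit_aux Khat α hα
  have hu2 : IsUnit M := isUnit_aux K α hα
  set B := Ring.inverse Mh with hB
  set C := Ring.inverse M with hC
  have hMhx : ∀ x, Mh x = (α : ℂ) • x + adjoint Khat (Khat x) := apply_aux Khat α
  have hMx : ∀ x, M x = (α : ℂ) • x + adjoint K (K x) := apply_aux K α
  have hBMh : ∀ x, B (Mh x) = x := fun x => by
    rw [← ContinuousLinearMap.mul_apply, Ring.inverse_mul_cancel _ hu1,
      ContinuousLinearMap.one_apply]
  have hCM : ∀ x, C (M x) = x := fun x => by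
    rw [← ContinuousLinearMap.mul_apply, Ring.inverse_mul_cancel _ hu2,
      ContinuousLinearMap.one_apply]
  have hMC : ∀ x, M (C x) = x := fun x => by
    rw [← ContinuousLinearMap.mul_apply, Ring.mul_inverse_cancel _ hu2,
      ContinuousLinearMap.one_apply]
  set b := C β with hb
  have hβ : β = (α : ℂ) • b + adjoint K (K b) := by
    conv_lhs => rw [← hMC β, hMx]
  have hB' : ∀ x : H₁, B (adjoint Khat (Khat x)) = x - (α : ℂ) • B x := by
    intro x
    have h := hBMh x
    rw [hMhx x, map_add, map_smul] at h
    rw [eq_sub_iff_add_eq, add_comm]; exact h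
  have h5 : C (adjoint K (K β)) = β - (α : ℂ) • b := by
    have h := hCM β
    rw [hMx β, map_add, map_smul] at h
    rw [eq_sub_iff_add_eq, add_comm]; exact h
  have h4 : B (adjoint Khat (Khat β)) =
      adjoint K (K b) + (α : ℂ) • B (adjoint Khat (Khat b)) - (α : ℂ) • B (adjoint K (K b)) := by
    conv_lhs => rw [hβ]
    simp only [map_add, map_smul, hB']
    abel
  simp only [comp_apply, map_sub, map_add, sub_apply, ContinuousLinearMap.map_smul]
  rw [h4, h5, hβ]
  module
end

section
/- Let H₁, H₂ be complex Hilbert spaces, K̂, K̂_m : H₁ → H₂ bounded linear operators, α > 0, and r̂ ∈ H₂. Suppose α I + K̂_m K̂* is invertible with ‖(α I + K̂_m K̂*)⁻¹‖_op ≤ 1/α. Define β̂ = K̂*(α I + K̂ K̂*)⁻¹ r̂ and β̂_m = K̂*(α I + K̂_m K̂*)⁻¹ r̂. Then ‖β̂_m − β̂‖ ≤ (1/(2 α^{3/2})) · ‖(K̂ − K̂_m) K̂*‖_op · ‖r̂‖. -/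
open ContinuousLinearMap
open scoped ComplexInnerProductSpace

/-- Key estimate: `αI + K̂K̂*` is invertible and `‖K̂* (αI + K̂K̂*)⁻¹ y‖ ≤ ‖y‖ / (2√α)`. -/
theorem stmt_14_aux {H₁ H₂ : Type*} [NormedAddCommGroup H₁] [InnerProductSpace ℂ H₁]
    [CompleteSpace H₁] [NormedAddCommGroup H₂] [InnerProductSpace ℂ H₂] [CompleteSpace H₂]
    (Khat : H₁ →L[ℂ] H₂) (α : ℝ) (hα : 0 < α) :
    IsUnit ((α : ℂ) • (1 : H₂ →L[ℂ] H₂) + Khat ∘L adjoint Khat) ∧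
    ∀ y : H₂, ‖adjoint Khat
        (Ring.inverse ((α : ℂ) • (1 : H₂ →L[ℂ] H₂) + Khat ∘L adjoint Khat) y)‖
      ≤ 1 / (2 * Real.sqrt α) * ‖y‖ := by
  set A : H₂ →L[ℂ] H₂ := (α : ℂ) • (1 : H₂ →L[ℂ] H₂) + Khat ∘L adjoint Khat with hA
  have hinner : ∀ x : H₂, ⟪A x, x⟫ = (α : ℂ) * (‖x‖ : ℂ) ^ 2 + (‖adjoint Khat x‖ : ℂ) ^ 2 := by
    intro x
    have h1 : ⟪(Khat ∘L adjoint Khat) x, x⟫ = (‖adjoint Khat x‖ : ℂ) ^ 2 := by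
      simp only [coe_comp', Function.comp_apply]
      rw [← adjoint_inner_right Khat, inner_self_eq_norm_sq_to_K]
      norm_cast
    simp only [hA, add_apply, smul_apply, one_apply, inner_add_left, inner_smul_left,
      Complex.conj_ofReal, h1, inner_self_eq_norm_sq_to_K]
    rw [ContinuousLinearMap.one_apply, inner_self_eq_norm_sq_to_K]
    rfl
  have hUnitA : IsUnit A := by
    apply isUnit_of_forall_le_norm_inner_map A (c := ⟨α, hα.le⟩) (by exact_mod_cast hα)
    intro x
    have h := hinner x
    calc ‖x‖ ^ 2 * (⟨α, hα.le⟩ : NNReal) = α * ‖x‖ ^ 2 := by push_cast; ring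
      _ ≤ α * ‖x‖ ^ 2 + ‖adjoint Khat x‖ ^ 2 := le_add_of_nonneg_right (by positivity)
      _ ≤ ‖⟪A x, x⟫‖ := by
          rw [h]
          rw [← Complex.ofReal_pow, ← Complex.ofReal_pow, ← Complex.ofReal_mul,
            ← Complex.ofReal_add, Complex.norm_real]
          exact le_abs_self _
  refine ⟨hUnitA, fun y => ?_⟩
  set x : H₂ := Ring.inverse A y with hx
  have hAx : A x = y := by
    have h : (A * Ring.inverse A) y = (1 : H₂ →L[ℂ] H₂) y := by
      rw [Ring.mul_inverse_cancel A hUnitA]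
    simpa [mul_apply] using h
  set u : H₁ := adjoint Khat x with hu
  set t : H₂ := Khat u with ht
  have hy : y = (α : ℂ) • x + t := by
    rw [← hAx]; simp [hA, ht, hu]
  have hxt : ⟪x, t⟫ = (‖u‖ : ℂ) ^ 2 := by
    rw [ht, ← adjoint_inner_left Khat, ← hu, inner_self_eq_norm_sq_to_K]
    norm_cast
  have hnormy : ‖y‖ ^ 2 = α ^ 2 * ‖x‖ ^ 2 + 2 * (α * ‖u‖ ^ 2) + ‖t‖ ^ 2 := by
    have hre : RCLike.re ⟪(α : ℂ) • x, t⟫ = α * ‖u‖ ^ 2 := by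
      rw [inner_smul_left, Complex.conj_ofReal, hxt]
      norm_cast
    rw [hy, @norm_add_sq ℂ, hre, norm_smul, Complex.norm_real, Real.norm_eq_abs,
      abs_of_pos hα, mul_pow]
  have hu2 : ‖u‖ ^ 2 ≤ ‖x‖ * ‖t‖ := by
    calc ‖u‖ ^ 2 = Complex.re ⟪x, t⟫ := by rw [hxt]; norm_cast
      _ ≤ ‖⟪x, t⟫‖ := Complex.re_le_norm _
      _ ≤ ‖x‖ * ‖t‖ := norm_inner_le_norm x t
  have key : (2 * Real.sqrt α * ‖u‖) ^ 2 ≤ ‖y‖ ^ 2 := by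
    have hs : Real.sqrt α ^ 2 = α := Real.sq_sqrt hα.le
    nlinarith [sq_nonneg (α * ‖x‖ - ‖t‖), hu2, hα.le, norm_nonneg x, norm_nonneg t]
  have h3 : 2 * Real.sqrt α * ‖u‖ ≤ ‖y‖ := by
    have h4 := Real.sqrt_le_sqrt key
    have hs : 0 < Real.sqrt α := Real.sqrt_pos.mpr hα
    rwa [Real.sqrt_sq (by positivity), Real.sqrt_sq (norm_nonneg y)] at h4
  have hs : 0 < 2 * Real.sqrt α := by positivity
  show ‖u‖ ≤ _
  rw [div_mul_eq_mul_div, one_mul, le_div_iff₀ hs]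
  linarith

/-- Deterministic discretization estimate: with `β̂ = K̂*(α I + K̂K̂*)⁻¹ r̂` and
`β̂_m = K̂*(α I + K̂_m K̂*)⁻¹ r̂`, if `α I + K̂_m K̂*` is invertible with inverse of norm at
most `1/α`, then `‖β̂_m − β̂‖ ≤ (1/(2 α^(3/2))) ‖(K̂ − K̂_m) K̂*‖ ‖r̂‖`. -/
theorem stmt_14 {H₁ H₂ : Type*} [NormedAddCommGroup H₁] [InnerProductSpace ℂ H₁]
    [CompleteSpace H₁] [NormedAddCommGroup H₂] [InnerProductSpace ℂ H₂] [CompleteSpace H₂]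
    (Khat Khatm : H₁ →L[ℂ] H₂) (α : ℝ) (hα : 0 < α) (rhat : H₂)
    (hUnit : IsUnit ((α : ℂ) • (1 : H₂ →L[ℂ] H₂) + Khatm ∘L adjoint Khat))
    (hInvNorm : ‖Ring.inverse ((α : ℂ) • (1 : H₂ →L[ℂ] H₂) + Khatm ∘L adjoint Khat)‖ ≤ 1 / α)
    (βhat βhatm : H₁)
    (hβhat : βhat = adjoint Khat
      (Ring.inverse ((α : ℂ) • (1 : H₂ →L[ℂ] H₂) + Khat ∘L adjoint Khat) rhat))
    (hβhatm : βhatm = adjoint Khat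
      (Ring.inverse ((α : ℂ) • (1 : H₂ →L[ℂ] H₂) + Khatm ∘L adjoint Khat) rhat)) :
    ‖βhatm - βhat‖ ≤ 1 / (2 * α ^ ((3 : ℝ) / 2)) * ‖(Khat - Khatm) ∘L adjoint Khat‖ * ‖rhat‖ := by
  set A : H₂ →L[ℂ] H₂ := (α : ℂ) • (1 : H₂ →L[ℂ] H₂) + Khat ∘L adjoint Khat with hA
  set Am : H₂ →L[ℂ] H₂ := (α : ℂ) • (1 : H₂ →L[ℂ] H₂) + Khatm ∘L adjoint Khat with hAm
  obtain ⟨hUnitA, hbound⟩ := stmt_14_aux Khat α hα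
  rw [← hA] at hUnitA hbound
  set D : H₂ →L[ℂ] H₂ := (Khat - Khatm) ∘L adjoint Khat with hD
  have hdiff : A - Am = D := by
    rw [hA, hAm, hD, sub_comp]
    abel
  have hinvdiff : Ring.inverse Am - Ring.inverse A
      = Ring.inverse A * D * Ring.inverse Am := by
    have h1 : Ring.inverse A * A = 1 := Ring.inverse_mul_cancel A hUnitA
    have h2 : Am * Ring.inverse Am = 1 := Ring.mul_inverse_cancel Am hUnit
    calc Ring.inverse Am - Ring.inverse A
        = Ring.inverse A * A * Ring.inverse Am
          - Ring.inverse A * (Am * Ring.inverse Am) := by rw [h1, h2, one_mul, mul_one]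
      _ = Ring.inverse A * (A - Am) * Ring.inverse Am := by noncomm_ring
      _ = _ := by rw [hdiff]
  have hform : βhatm - βhat
      = adjoint Khat (Ring.inverse A (D (Ring.inverse Am rhat))) := by
    rw [hβhatm, hβhat, ← map_sub]
    have h := congrArg (fun f : H₂ →L[ℂ] H₂ => f rhat) hinvdiff
    simp only [sub_apply, ContinuousLinearMap.mul_apply] at h
    rw [h]
  have h1 : ‖βhatm - βhat‖ ≤ 1 / (2 * Real.sqrt α) * ‖D (Ring.inverse Am rhat)‖ := by
    rw [hform]; exact hbound _
  have h2 : ‖D (Ring.inverse Am rhat)‖ ≤ ‖D‖ * (1 / α * ‖rhat‖) := by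
    refine (D.le_opNorm _).trans ?_
    have h3 : ‖Ring.inverse Am rhat‖ ≤ 1 / α * ‖rhat‖ :=
      ((Ring.inverse Am).le_opNorm rhat).trans
        (mul_le_mul_of_nonneg_right hInvNorm (norm_nonneg _))
    exact mul_le_mul_of_nonneg_left h3 (norm_nonneg _)
  have hrpow : α ^ ((3 : ℝ) / 2) = α * Real.sqrt α := by
    rw [show (3 : ℝ) / 2 = 1 + 1 / 2 by norm_num, Real.rpow_add hα, Real.rpow_one,
      ← Real.sqrt_eq_rpow]
  have hs : 0 < Real.sqrt α := Real.sqrt_pos.mpr hα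
  calc ‖βhatm - βhat‖ ≤ 1 / (2 * Real.sqrt α) * (‖D‖ * (1 / α * ‖rhat‖)) :=
        h1.trans (mul_le_mul_of_nonneg_left h2 (by positivity))
    _ = 1 / (2 * α ^ ((3 : ℝ) / 2)) * ‖D‖ * ‖rhat‖ := by
        rw [hrpow]; field_simp
end

section
/- Let (U, ν) be a σ-finite measure space, T ≥ 1 an integer, z₁,…,z_T : [0,1] → ℝ continuous functions, and ψ₁,…,ψ_T ∈ L²(ν). Define the kernel k̂(s,u) = (1/T) Σ_{t=1}^T z_t(s) ψ_t(u), let 0 = s₀ ≤ s₁ ≤ ⋯ ≤ s_m = 1 with δ_j = s_j − s_{j−1}, and let D : L²(ν) → L²(ν) be the bounded linear operator (D g)(u) = ∫₀¹ k̂(s,u) (∫_U g(v) k̂(s,v) dν(v)) ds − Σ_{j=1}^m k̂(s_j,u) (∫_U g(v) k̂(s_j,v) dν(v)) δ_j. Then ‖D‖_op ≤ (max_{1≤t≤T} ‖ψ_t‖_{L²(ν)})² · max_{1≤t,k≤T} |Σ_{j=1}^m z_t(s_j) z_k(s_j) δ_j − ∫₀¹ z_t(s) z_k(s) ds|. -/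
open MeasureTheory

/-- The kernel `k̂(s,u) = (1/T) ∑_t z_t(s) ψ_t(u)` of the sample integral operator. -/
noncomputable def sampleKernel {U : Type*} (T : ℕ) (z : Fin T → ℝ → ℝ)
    (ψ : Fin T → (U → ℝ)) : ℝ → U → ℝ :=
  fun x u => (T : ℝ)⁻¹ * ∑ t, z t x * ψ t u

private lemma coeFn_sum_smul_aux {U : Type*} [MeasurableSpace U] (ν : Measure U) {ι : Type*}
    (sfin : Finset ι) (c : ι → ℝ) (f : ι → Lp ℝ 2 ν) :
    ⇑(∑ i ∈ sfin, c i • f i) =ᵐ[ν] fun x => ∑ i ∈ sfin, c i * f i x := by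
  classical
  induction sfin using Finset.induction_on with
  | empty =>
      simp only [Finset.sum_empty]
      filter_upwards [Lp.coeFn_zero ℝ 2 ν] with x hx
      simpa using hx
  | insert _ _ hnot ih =>
      rename_i b sfin
      rw [Finset.sum_insert hnot]
      filter_upwards [Lp.coeFn_add (c b • f b) (∑ i ∈ sfin, c i • f i),
        Lp.coeFn_smul (c b) (f b), ih] with x h1 h2 h3
      simp only [h1, Pi.add_apply, h2, Pi.smul_apply, smul_eq_mul, h3,
        Finset.sum_insert hnot]

/-- Reduction of the operator-norm discretization error `‖(K̂ − K̂_m)K̂*‖` to the uniform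
Riemann-sum approximation error of the products `z_t z_k`: for the operator `D = (K̂ − K̂_m)K̂*`
acting as `(D g)(u) = ∫₀¹ k̂(s,u)(∫ g(v) k̂(s,v) dν(v)) ds − ∑_j k̂(s_j,u)(∫ g(v) k̂(s_j,v) dν(v)) δ_j`,
one has `‖D‖ ≤ (max_t ‖ψ_t‖)² · max_{t,k} |∑_j z_t(s_j) z_k(s_j) δ_j − ∫₀¹ z_t z_k|`. -/
theorem stmt_16 {U : Type*} [MeasurableSpace U] (ν : Measure U) [SigmaFinite ν]
    (T : ℕ) (hT : 0 < T) (z : Fin T → ℝ → ℝ)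
    (hz : ∀ t, ContinuousOn (z t) (Set.Icc (0 : ℝ) 1))
    (ψ : Fin T → Lp ℝ 2 ν)
    (m : ℕ) (hm : 0 < m) (s : Fin (m + 1) → ℝ) (hs_mono : Monotone s)
    (hs0 : s 0 = 0) (hsm : s (Fin.last m) = 1)
    (D : Lp ℝ 2 ν →L[ℝ] Lp ℝ 2 ν)
    (hD : ∀ g : Lp ℝ 2 ν, (D g : U → ℝ) =ᵐ[ν] fun u =>
      (∫ x in (0 : ℝ)..1, sampleKernel T z (fun t => (ψ t : U → ℝ)) x u *
          ∫ v, g v * sampleKernel T z (fun t => (ψ t : U → ℝ)) x v ∂ν) -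
        ∑ j : Fin m, sampleKernel T z (fun t => (ψ t : U → ℝ)) (s j.succ) u *
          (∫ v, g v * sampleKernel T z (fun t => (ψ t : U → ℝ)) (s j.succ) v ∂ν) *
          (s j.succ - s j.castSucc)) :
    ‖D‖ ≤
      (Finset.sup' Finset.univ ⟨⟨0, hT⟩, Finset.mem_univ _⟩ fun t : Fin T => ‖ψ t‖) ^ 2 *
        Finset.sup' Finset.univ ⟨(⟨0, hT⟩, ⟨0, hT⟩), Finset.mem_univ _⟩
          (fun tk : Fin T × Fin T =>
            |(∑ j : Fin m, z tk.1 (s j.succ) * z tk.2 (s j.succ) * (s j.succ - s j.castSucc)) -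
              ∫ x in (0 : ℝ)..1, z tk.1 x * z tk.2 x|) := by
  classical
  set K : ℝ → U → ℝ := sampleKernel T z (fun t => (ψ t : U → ℝ)) with hKdef
  set M : ℝ := Finset.sup' Finset.univ ⟨⟨0, hT⟩, Finset.mem_univ _⟩
    (fun t : Fin T => ‖ψ t‖) with hMdef
  set C : ℝ := Finset.sup' Finset.univ ⟨(⟨0, hT⟩, ⟨0, hT⟩), Finset.mem_univ _⟩
    (fun tk : Fin T × Fin T =>
      |(∑ j : Fin m, z tk.1 (s j.succ) * z tk.2 (s j.succ) * (s j.succ - s j.castSucc)) -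
        ∫ x in (0 : ℝ)..1, z tk.1 x * z tk.2 x|) with hCdef
  have hT0 : (T : ℝ) ≠ 0 := Nat.cast_ne_zero.mpr hT.ne'
  set β : ℝ := (T : ℝ)⁻¹ * (T : ℝ)⁻¹ with hβdef
  have hβ0 : 0 ≤ β := by positivity
  have hM0 : 0 ≤ M := le_trans (norm_nonneg (ψ ⟨0, hT⟩))
    (Finset.le_sup' (fun t : Fin T => ‖ψ t‖) (Finset.mem_univ (⟨0, hT⟩ : Fin T)))
  have hC0 : 0 ≤ C := le_trans (abs_nonneg _)
    (Finset.le_sup' (fun tk : Fin T × Fin T =>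
      |(∑ j : Fin m, z tk.1 (s j.succ) * z tk.2 (s j.succ) * (s j.succ - s j.castSucc)) -
        ∫ x in (0 : ℝ)..1, z tk.1 x * z tk.2 x|)
      (Finset.mem_univ ((⟨0, hT⟩, ⟨0, hT⟩) : Fin T × Fin T)))
  have hMt : ∀ t : Fin T, ‖ψ t‖ ≤ M := fun t =>
    Finset.le_sup' (fun t : Fin T => ‖ψ t‖) (Finset.mem_univ t)
  -- the Riemann-sum error functional
  set Ee : Fin T × Fin T → ℝ := fun p =>
    (∫ x in (0 : ℝ)..1, z p.1 x * z p.2 x) -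
      ∑ j : Fin m, z p.1 (s j.succ) * z p.2 (s j.succ) * (s j.succ - s j.castSucc) with hEedef
  have hCp : ∀ p : Fin T × Fin T, |Ee p| ≤ C := by
    intro p
    rw [hEedef]
    rw [abs_sub_comm]
    exact Finset.le_sup' (fun tk : Fin T × Fin T =>
      |(∑ j : Fin m, z tk.1 (s j.succ) * z tk.2 (s j.succ) * (s j.succ - s j.castSucc)) -
        ∫ x in (0 : ℝ)..1, z tk.1 x * z tk.2 x|) (Finset.mem_univ p)
  refine ContinuousLinearMap.opNorm_le_bound _ (mul_nonneg (pow_nonneg hM0 2) hC0) fun g => ?_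
  set a : Fin T → ℝ := fun t => ∫ v, g v * ψ t v ∂ν with hadef
  have hint : ∀ t : Fin T, Integrable (fun v => g v * ψ t v) ν := by
    intro t
    have := L2.integrable_inner (𝕜 := ℝ) g (ψ t)
    simpa [RCLike.inner_apply, mul_comm] using this
  have ha : ∀ t : Fin T, |a t| ≤ ‖g‖ * ‖ψ t‖ := by
    intro t
    have h1 : a t = (inner ℝ g (ψ t) : ℝ) := by
      rw [L2.inner_def]
      simp [RCLike.inner_apply, hadef, mul_comm]
    rw [h1]
    exact abs_real_inner_le_norm g (ψ t)
  have hinner : ∀ x : ℝ, (∫ v, g v * K x v ∂ν) = (T : ℝ)⁻¹ * ∑ k, z k x * a k := by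
    intro x
    simp only [hKdef, sampleKernel]
    have hfun : ∀ v : U, g v * ((T : ℝ)⁻¹ * ∑ t, z t x * ψ t v)
        = ∑ t, ((T : ℝ)⁻¹ * z t x) * (g v * ψ t v) := by
      intro v
      rw [Finset.mul_sum, Finset.mul_sum]
      exact Finset.sum_congr rfl fun t _ => by ring
    rw [integral_congr_ae (Filter.Eventually.of_forall hfun),
      integral_finset_sum _ fun t _ => ((hint t).const_mul _), Finset.mul_sum]
    refine Finset.sum_congr rfl fun t _ => ?_
    rw [integral_const_mul]
    ring
  have hexp : ∀ (x : ℝ) (u : U), K x u * ((T : ℝ)⁻¹ * ∑ k, z k x * a k)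
      = ∑ p : Fin T × Fin T, (β * a p.2 * ψ p.1 u) * (z p.1 x * z p.2 x) := by
    intro x u
    simp only [hKdef, sampleKernel]
    rw [Fintype.sum_prod_type,
      show ((T : ℝ)⁻¹ * ∑ t, z t x * ψ t u) * ((T : ℝ)⁻¹ * ∑ k, z k x * a k)
        = β * ((∑ t, z t x * ψ t u) * (∑ k, z k x * a k)) from by rw [hβdef]; ring,
      Finset.sum_mul_sum, Finset.mul_sum]
    refine Finset.sum_congr rfl fun t _ => ?_
    rw [Finset.mul_sum]
    exact Finset.sum_congr rfl fun k _ => by ring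
  have hzzInt : ∀ p : Fin T × Fin T,
      IntervalIntegrable (fun x => z p.1 x * z p.2 x) MeasureTheory.volume 0 1 := by
    intro p
    apply ContinuousOn.intervalIntegrable
    rw [Set.uIcc_of_le zero_le_one]
    exact (hz p.1).mul (hz p.2)
  set cp : Fin T × Fin T → ℝ := fun p => β * a p.2 * Ee p with hcpdef
  have key : ∀ u : U,
      ((∫ x in (0 : ℝ)..1, K x u * ∫ v, g v * K x v ∂ν) -
        ∑ j : Fin m, K (s j.succ) u * (∫ v, g v * K (s j.succ) v ∂ν) *
          (s j.succ - s j.castSucc))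
      = ∑ p : Fin T × Fin T, cp p * ψ p.1 u := by
    intro u
    have h1 : (∫ x in (0 : ℝ)..1, K x u * ∫ v, g v * K x v ∂ν)
        = ∑ p : Fin T × Fin T, (β * a p.2 * ψ p.1 u) *
            ∫ x in (0 : ℝ)..1, z p.1 x * z p.2 x := by
      rw [show (fun x => K x u * ∫ v, g v * K x v ∂ν)
          = fun x => ∑ p : Fin T × Fin T, (β * a p.2 * ψ p.1 u) * (z p.1 x * z p.2 x) from
        funext fun x => by rw [hinner x]; exact hexp x u]
      rw [intervalIntegral.integral_finset_sum fun p _ => ((hzzInt p).const_mul _)]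
      exact Finset.sum_congr rfl fun p _ => intervalIntegral.integral_const_mul _ _
    have h2 : (∑ j : Fin m, K (s j.succ) u * (∫ v, g v * K (s j.succ) v ∂ν) *
          (s j.succ - s j.castSucc))
        = ∑ p : Fin T × Fin T, (β * a p.2 * ψ p.1 u) *
            ∑ j : Fin m, z p.1 (s j.succ) * z p.2 (s j.succ) * (s j.succ - s j.castSucc) := by
      have hterm : ∀ j : Fin m,
          K (s j.succ) u * (∫ v, g v * K (s j.succ) v ∂ν) * (s j.succ - s j.castSucc)
          = ∑ p : Fin T × Fin T, (β * a p.2 * ψ p.1 u) *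
              (z p.1 (s j.succ) * z p.2 (s j.succ) * (s j.succ - s j.castSucc)) := by
        intro j
        rw [hinner, hexp, Finset.sum_mul]
        exact Finset.sum_congr rfl fun p _ => by ring
      rw [Finset.sum_congr rfl fun j _ => hterm j, Finset.sum_comm]
      exact Finset.sum_congr rfl fun p _ => by rw [Finset.mul_sum]
    rw [h1, h2, ← Finset.sum_sub_distrib]
    refine Finset.sum_congr rfl fun p _ => ?_
    rw [hcpdef, hEedef]
    ring
  have hDg : D g = ∑ p : Fin T × Fin T, cp p • ψ p.1 := by
    refine Lp.ext ?_
    filter_upwards [hD g, coeFn_sum_smul_aux ν Finset.univ cp (fun p => ψ p.1)] with u h1 h2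
    rw [h1, h2]
    simpa using key u
  calc ‖D g‖ = ‖∑ p : Fin T × Fin T, cp p • ψ p.1‖ := by rw [hDg]
    _ ≤ ∑ p : Fin T × Fin T, ‖cp p • ψ p.1‖ := norm_sum_le _ _
    _ ≤ ∑ _p : Fin T × Fin T, β * (‖g‖ * M) * C * M := by
        refine Finset.sum_le_sum fun p _ => ?_
        rw [norm_smul, Real.norm_eq_abs]
        have hcp_le : |cp p| ≤ β * (‖g‖ * M) * C := by
          rw [hcpdef]
          simp only []
          rw [abs_mul, abs_mul, abs_of_nonneg hβ0]
          have h1 : |a p.2| ≤ ‖g‖ * M :=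
            le_trans (ha p.2) (mul_le_mul_of_nonneg_left (hMt p.2) (norm_nonneg g))
          have h2 : |Ee p| ≤ C := hCp p
          exact mul_le_mul (mul_le_mul_of_nonneg_left h1 hβ0) h2 (abs_nonneg _)
            (mul_nonneg hβ0 (mul_nonneg (norm_nonneg g) hM0))
        exact mul_le_mul hcp_le (hMt p.1) (norm_nonneg _)
          (mul_nonneg (mul_nonneg hβ0 (mul_nonneg (norm_nonneg g) hM0)) hC0)
    _ = M ^ 2 * C * ‖g‖ := by
        rw [Finset.sum_const, Finset.card_univ, Fintype.card_prod, Fintype.card_fin,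
          nsmul_eq_mul, hβdef]
        push_cast
        field_simp
end
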